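/- Let 0 <= eps_1 < eps_2, let c > 1 be a constant such that ||exp(-itH) - (I - itH)||_2 <= c t^2 for all t in [0,1/2] and all Hermitian H with ||H||_infty <= 1 (where ||.||_2 is normalized Frobenius norm), and set alpha = (eps_2 - eps_1)/(3c). Let H be an n-qubit Hermitian matrix with ||H||_infty <= 1, and for an operator A with Pauli expansion A = sum_x a_x sigma_x let A_{>k} denote the part supported on Pauli strings of weight greater than k. If ||H_{>k}||_2 <= eps_1 then ||U(alpha)_{>k}||_2 <= (eps_2-eps_1)(2 eps_1 + eps_2)/(9c), whereas if ||H_{>k}||_2 >= eps_2 then ||U(alpha)_{>k}||_2 >= (eps_2-eps_1)(eps_1 + 2 eps_2)/(9c), where U(alpha) = exp(-i alpha H). -/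

import Mathlib

open Finset Matrix
open scoped Matrix.Norms.L2Operator

/-- `F n` is `𝔽₂^{2n}`, indexing the `n`-qubit Pauli operators. -/
abbrev F (n : ℕ) := (Fin n → ZMod 2) × (Fin n → ZMod 2)

/-- The `n`-qubit Pauli operator `σ_{(a,b)} = i^{a·b} X^{a₁}Z^{b₁} ⊗ ⋯ ⊗ X^{aₙ}Z^{bₙ}`. -/
noncomputable def pauli {n : ℕ} (x : F n) :
    Matrix (Fin n → ZMod 2) (Fin n → ZMod 2) ℂ := fun u v =>
  Complex.I ^ (∑ i, (x.1 i).val * (x.2 i).val) *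
    (-1 : ℂ) ^ (∑ i, (x.2 i).val * (v i).val) * (if u = v + x.1 then 1 else 0)

/-- The weight `|x|` of a Pauli string: the number of non-identity tensor factors. -/
def wt {n : ℕ} (x : F n) : ℕ :=
  (Finset.univ.filter (fun i => ¬(x.1 i = 0 ∧ x.2 i = 0))).card

/-- The Pauli coefficient `Â_x = 2^{-n} tr(σ_x† A)`. -/
noncomputable def pauliCoeff {n : ℕ}
    (A : Matrix (Fin n → ZMod 2) (Fin n → ZMod 2) ℂ) (x : F n) : ℂ :=
  (1 / (2 : ℂ) ^ n) * ((pauli x)ᴴ * A).trace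

/-- `A_{>k}`: the part of `A` supported on Pauli strings of weight greater than `k`. -/
noncomputable def projGt {n : ℕ} (k : ℕ)
    (A : Matrix (Fin n → ZMod 2) (Fin n → ZMod 2) ℂ) :
    Matrix (Fin n → ZMod 2) (Fin n → ZMod 2) ℂ :=
  ∑ x ∈ Finset.univ.filter (fun x : F n => k < wt x), pauliCoeff A x • pauli x

/-- The normalized Frobenius norm `‖A‖₂ = sqrt(tr(A†A)/2^n)`. -/
noncomputable def norm2 {n : ℕ}
    (A : Matrix (Fin n → ZMod 2) (Fin n → ZMod 2) ℂ) : ℝ :=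
  Real.sqrt (((Aᴴ * A).trace).re / 2 ^ n)

/-! ### Auxiliary material -/

namespace LocAux

/-- scalar second-order Taylor bound for `e^{ix}`: `sin` lower bound. -/
lemma sin_lb {x : ℝ} (hx : 0 ≤ x) : x - x ^ 3 / 6 ≤ Real.sin x := by
  have hmono : MonotoneOn (fun x : ℝ => Real.sin x - x + x ^ 3 / 6) (Set.Ici 0) := by
    have hderiv : ∀ y : ℝ, HasDerivAt (fun x : ℝ => Real.sin x - x + x ^ 3 / 6)
        (Real.cos y - 1 + y ^ 2 / 2) y := by
      intro y
      have h1 : HasDerivAt (fun x : ℝ => Real.sin x - x + x ^ 3 / 6)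
          (Real.cos y - 1 + (3 : ℕ) * y ^ 2 / 6) y :=
        ((Real.hasDerivAt_sin y).sub (hasDerivAt_id y)).add ((hasDerivAt_pow 3 y).div_const 6)
      convert h1 using 1
      push_cast
      ring
    apply monotoneOn_of_deriv_nonneg (convex_Ici 0)
    · exact Continuous.continuousOn (by continuity)
    · intro y _
      exact (hderiv y).differentiableAt.differentiableWithinAt
    · intro y _
      rw [(hderiv y).deriv]
      have := Real.one_sub_sq_div_two_le_cos (x := y)
      linarith
  have h0 : (fun x : ℝ => Real.sin x - x + x ^ 3 / 6) 0 ≤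
      (fun x : ℝ => Real.sin x - x + x ^ 3 / 6) x :=
    hmono (Set.self_mem_Ici) (Set.mem_Ici.mpr hx) hx
  simp at h0
  linarith

lemma exp_taylor2_aux {x : ℝ} (hx : 0 ≤ x) :
    ‖Complex.exp (Complex.I * x) - 1 - Complex.I * x‖ ≤ x ^ 2 := by
  have hre : (Complex.exp (Complex.I * x) - 1 - Complex.I * x).re = Real.cos x - 1 := by
    simp [mul_comm Complex.I (x:ℂ), Complex.exp_mul_I, Complex.cos_ofReal_re]
  have him : (Complex.exp (Complex.I * x) - 1 - Complex.I * x).im = Real.sin x - x := by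
    simp [mul_comm Complex.I (x:ℂ), Complex.exp_mul_I, Complex.sin_ofReal_re]
  rw [Complex.norm_def, Complex.normSq_apply, hre, him]
  have key : (Real.cos x - 1) * (Real.cos x - 1) + (Real.sin x - x) * (Real.sin x - x)
      ≤ (x ^ 2) ^ 2 := by
    have hc := Real.one_sub_sq_div_two_le_cos (x := x)
    have hs := sin_lb hx
    have hp := Real.sin_sq_add_cos_sq x
    have hc' := Real.cos_le_one x
    nlinarith [mul_nonneg hx (sub_nonneg.2 hs), sq_nonneg (x^2), sq_nonneg x]
  calc Real.sqrt ((Real.cos x - 1) * (Real.cos x - 1) + (Real.sin x - x) * (Real.sin x - x))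
      ≤ Real.sqrt ((x ^ 2) ^ 2) := Real.sqrt_le_sqrt key
    _ = x ^ 2 := Real.sqrt_sq (sq_nonneg x)

/-- `|e^{ix} - 1 - ix| ≤ x²` for every real `x`. -/
lemma exp_taylor2 (x : ℝ) :
    ‖Complex.exp (Complex.I * x) - 1 - Complex.I * x‖ ≤ x ^ 2 := by
  rcases le_or_gt 0 x with hx | hx
  · exact exp_taylor2_aux hx
  · have heq : Complex.exp (Complex.I * x) - 1 - Complex.I * x
        = (starRingEnd ℂ) (Complex.exp (Complex.I * (-x)) - 1 - Complex.I * (-x)) := by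
      rw [map_sub, map_sub, ← Complex.exp_conj]
      simp [Complex.conj_I]
    rw [heq, Complex.norm_conj]
    have h := exp_taylor2_aux (neg_nonneg.mpr hx.le)
    push_cast at h
    calc ‖Complex.exp (Complex.I * -(x:ℂ)) - 1 - Complex.I * -(x:ℂ)‖ ≤ (-x) ^ 2 := h
      _ = x ^ 2 := by ring

variable {n : ℕ}

abbrev Q (n : ℕ) := Fin n → ZMod 2

lemma card_Q : Fintype.card (Q n) = 2 ^ n := by simp [Q]

/-! #### The `L²` structure -/

noncomputable def toE (A : Matrix (Q n) (Q n) ℂ) : EuclideanSpace ℂ (Q n × Q n) :=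
  (WithLp.equiv 2 _).symm (fun p => A p.1 p.2)

lemma toE_add (A B : Matrix (Q n) (Q n) ℂ) : toE (A + B) = toE A + toE B := rfl

lemma toE_smul (s : ℂ) (A : Matrix (Q n) (Q n) ℂ) : toE (s • A) = s • toE A := rfl

lemma trace_form (A B : Matrix (Q n) (Q n) ℂ) :
    (Aᴴ * B).trace = ∑ p : Q n × Q n, (starRingEnd ℂ) (A p.1 p.2) * B p.1 p.2 := by
  rw [Fintype.sum_prod_type, Matrix.trace]
  simp [Matrix.diag, Matrix.mul_apply, Matrix.conjTranspose_apply]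
  rw [Finset.sum_comm]

lemma inner_toE (A B : Matrix (Q n) (Q n) ℂ) :
    (inner ℂ (toE A) (toE B) : ℂ) = (Aᴴ * B).trace := by
  rw [trace_form]; simp [toE, PiLp.inner_apply, mul_comm]

lemma trace_re_sq (A : Matrix (Q n) (Q n) ℂ) :
    ((Aᴴ * A).trace).re = ‖toE A‖ ^ 2 := by
  have h := inner_toE A A
  have h2 := inner_self_eq_norm_sq (𝕜 := ℂ) (toE A)
  rw [h] at h2
  exact h2

lemma norm2_eq (A : Matrix (Q n) (Q n) ℂ) :
    norm2 A = ‖toE A‖ / Real.sqrt (2 ^ n) := by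
  rw [norm2, trace_re_sq, Real.sqrt_div (sq_nonneg _), Real.sqrt_sq (norm_nonneg _)]

lemma norm2_nonneg (A : Matrix (Q n) (Q n) ℂ) : 0 ≤ norm2 A := Real.sqrt_nonneg _

lemma norm2_add_le (A B : Matrix (Q n) (Q n) ℂ) : norm2 (A + B) ≤ norm2 A + norm2 B := by
  rw [norm2_eq, norm2_eq, norm2_eq, toE_add, ← add_div]
  have hpos : (0:ℝ) < Real.sqrt (2 ^ n) := by positivity
  exact (div_le_div_iff_of_pos_right hpos).mpr (norm_add_le _ _)

lemma norm2_smul (s : ℂ) (A : Matrix (Q n) (Q n) ℂ) : norm2 (s • A) = ‖s‖ * norm2 A := by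
  rw [norm2_eq, norm2_eq, toE_smul, norm_smul, mul_div_assoc]

/-! #### Pauli orthogonality -/

lemma zmod_ne_val {a b : ZMod 2} (h : a ≠ b) : a.val + b.val = 1 := by revert a b; decide
lemma zmod_succ_val (a : ZMod 2) : (a + 1).val + a.val = 1 := by revert a; decide

lemma char_sum_ne (b b' : Q n) (hbb : b ≠ b') :
    ∑ v : Q n, (-1 : ℂ) ^ (∑ i, ((b i).val + (b' i).val) * (v i).val) = 0 := by
  set c : Fin n → ℕ := fun i => (b i).val + (b' i).val with hc
  set f : Q n → ℂ := fun v => (-1 : ℂ) ^ (∑ i, c i * (v i).val) with hf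
  obtain ⟨i0, hi0⟩ : ∃ i, b i ≠ b' i := by
    by_contra h; push_neg at h; exact hbb (funext h)
  set g : Q n → Q n := fun v => Function.update v i0 (v i0 + 1) with hg
  have hginv : Function.Involutive g := by
    intro v; ext i
    by_cases h : i = i0
    · subst h
      simp only [hg, Function.update_self]
      have : (1 : ZMod 2) + 1 = 0 := rfl
      rw [add_assoc, this, add_zero]
    · simp [hg, Function.update_of_ne h]
  have hneg : ∀ v, f (g v) = - f v := by
    intro v
    have hodd : Odd ((∑ i, c i * ((g v) i).val) + ∑ i, c i * (v i).val) := by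
      rw [← Finset.sum_add_distrib]
      have hsplit : (∑ i, (c i * ((g v) i).val + c i * (v i).val)) =
          (∑ i ∈ Finset.univ.erase i0, (c i * ((g v) i).val + c i * (v i).val)) +
          (c i0 * ((g v) i0).val + c i0 * (v i0).val) :=
        (Finset.sum_erase_add _ _ (Finset.mem_univ i0)).symm
      rw [hsplit]
      have h1 : c i0 * ((g v) i0).val + c i0 * (v i0).val = 1 := by
        rw [← mul_add]
        have : (g v) i0 = v i0 + 1 := Function.update_self _ _ _
        rw [this, zmod_succ_val, hc]
        simp [zmod_ne_val hi0]
      rw [h1]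
      apply Even.add_one
      apply Finset.even_sum
      intro i hi
      have : (g v) i = v i := Function.update_of_ne (Finset.ne_of_mem_erase hi) _ _
      rw [this, ← two_mul]
      exact even_two_mul _
    have hprod : f (g v) * f v = -1 := by
      rw [hf]
      dsimp only
      rw [← pow_add]
      exact Odd.neg_one_pow hodd
    have hsq : f v * f v = 1 := by
      rw [hf]; dsimp only; rw [← pow_add, ← two_mul, pow_mul]; norm_num
    calc f (g v) = f (g v) * (f v * f v) := by rw [hsq, mul_one]
    _ = (f (g v) * f v) * f v := by ring
    _ = - f v := by rw [hprod]; ring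
  have hgbij : Function.Bijective g := hginv.bijective
  have key : ∑ v : Q n, f v = ∑ v : Q n, f (g v) :=
    (Fintype.sum_bijective g hgbij (fun v => f (g v)) f (fun v => rfl)).symm
  have h2 : ∑ v : Q n, f v = - ∑ v : Q n, f v := by
    calc ∑ v : Q n, f v = ∑ v : Q n, f (g v) := key
    _ = ∑ v : Q n, - f v := Finset.sum_congr rfl (fun v _ => hneg v)
    _ = - ∑ v : Q n, f v := by rw [Finset.sum_neg_distrib]
  have h3 : (2 : ℂ) * ∑ v : Q n, f v = 0 := by linear_combination h2
  rcases mul_eq_zero.mp h3 with h | h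
  · norm_num at h
  · exact h

lemma pauli_orth (x y : F n) :
    ((pauli x)ᴴ * pauli y).trace = if x = y then (2 : ℂ) ^ n else 0 := by
  rw [trace_form, Fintype.sum_prod_type, Finset.sum_comm]
  have step1 : ∀ v : Q n, (∑ u : Q n, (starRingEnd ℂ) (pauli x u v) * pauli y u v)
      = (starRingEnd ℂ) (pauli x (v + y.1) v) *
        (Complex.I ^ (∑ i, (y.1 i).val * (y.2 i).val) *
          (-1 : ℂ) ^ (∑ i, (y.2 i).val * (v i).val)) := by
    intro v
    rw [Finset.sum_eq_single (v + y.1)]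
    · congr 1
      simp [pauli]
    · intro u _ hu
      have : pauli y u v = 0 := by simp [pauli, hu]
      rw [this, mul_zero]
    · intro h; exact absurd (Finset.mem_univ _) h
  simp only [step1]
  by_cases hxy : x = y
  · subst hxy
    rw [if_pos rfl]
    have hterm : ∀ v : Q n, (starRingEnd ℂ) (pauli x (v + x.1) v) *
        (Complex.I ^ (∑ i, (x.1 i).val * (x.2 i).val) *
          (-1 : ℂ) ^ (∑ i, (x.2 i).val * (v i).val)) = 1 := by
      intro v
      have hp : pauli x (v + x.1) v = Complex.I ^ (∑ i, (x.1 i).val * (x.2 i).val) *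
          (-1 : ℂ) ^ (∑ i, (x.2 i).val * (v i).val) := by simp [pauli]
      rw [hp]
      set q := ∑ i, (x.1 i).val * (x.2 i).val
      set e := ∑ i, (x.2 i).val * (v i).val
      have c1 : (starRingEnd ℂ) (Complex.I ^ q) = (-Complex.I) ^ q := by
        rw [map_pow, Complex.conj_I]
      have c2 : (starRingEnd ℂ) ((-1 : ℂ) ^ e) = (-1 : ℂ) ^ e := by
        rw [map_pow]; norm_num
      rw [_root_.map_mul, c1, c2]
      have : (-Complex.I) ^ q * ((-1:ℂ) ^ e) * (Complex.I ^ q * (-1:ℂ) ^ e)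
          = ((-Complex.I) * Complex.I) ^ q * ((-1:ℂ) * (-1:ℂ)) ^ e := by
        rw [mul_pow, mul_pow]; ring
      rw [this]
      norm_num [Complex.I_mul_I]
    simp only [hterm, Finset.sum_const, Finset.card_univ, card_Q, nsmul_eq_mul, mul_one]
    push_cast
    ring
  · rw [if_neg hxy]
    by_cases h1 : x.1 = y.1
    · have h2 : x.2 ≠ y.2 := fun h2 => hxy (Prod.ext h1 h2)
      have hterm : ∀ v : Q n, (starRingEnd ℂ) (pauli x (v + y.1) v) *
          (Complex.I ^ (∑ i, (y.1 i).val * (y.2 i).val) *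
            (-1 : ℂ) ^ (∑ i, (y.2 i).val * (v i).val))
          = ((starRingEnd ℂ) (Complex.I ^ (∑ i, (x.1 i).val * (x.2 i).val)) *
              Complex.I ^ (∑ i, (y.1 i).val * (y.2 i).val)) *
            (-1 : ℂ) ^ (∑ i, ((x.2 i).val + (y.2 i).val) * (v i).val) := by
        intro v
        have hp : pauli x (v + y.1) v = Complex.I ^ (∑ i, (x.1 i).val * (x.2 i).val) *
            (-1 : ℂ) ^ (∑ i, (x.2 i).val * (v i).val) := by
          simp [pauli, h1]
        rw [hp, _root_.map_mul]
        have c2 : (starRingEnd ℂ) ((-1 : ℂ) ^ (∑ i, (x.2 i).val * (v i).val))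
            = (-1 : ℂ) ^ (∑ i, (x.2 i).val * (v i).val) := by rw [map_pow]; norm_num
        rw [c2]
        have : (-1 : ℂ) ^ (∑ i, ((x.2 i).val + (y.2 i).val) * (v i).val)
            = (-1 : ℂ) ^ (∑ i, (x.2 i).val * (v i).val) *
              (-1 : ℂ) ^ (∑ i, (y.2 i).val * (v i).val) := by
          rw [← pow_add, ← Finset.sum_add_distrib]
          congr 1
          exact Finset.sum_congr rfl fun i _ => by ring
        rw [this]
        ring
      simp only [hterm]
      rw [← Finset.mul_sum, char_sum_ne x.2 y.2 h2, mul_zero]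
    · have hterm : ∀ v : Q n, (starRingEnd ℂ) (pauli x (v + y.1) v) = 0 := by
        intro v
        have : pauli x (v + y.1) v = 0 := by
          have hne : v + y.1 ≠ v + x.1 := by
            intro h; exact h1 ((add_right_inj v).mp h).symm
          simp [pauli, hne]
        rw [this, map_zero]
      simp only [hterm, zero_mul, Finset.sum_const_zero]

/-! #### Pauli coefficients and the projection -/

lemma trace_pauli_eq (A : Matrix (Q n) (Q n) ℂ) (y : F n) :
    ((pauli y)ᴴ * A).trace = (2 : ℂ) ^ n * pauliCoeff A y := by
  rw [pauliCoeff]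
  have h2 : ((2:ℂ) ^ n) ≠ 0 := pow_ne_zero _ two_ne_zero
  field_simp

lemma trace_conj_swap (A B : Matrix (Q n) (Q n) ℂ) :
    (Aᴴ * B).trace = (starRingEnd ℂ) ((Bᴴ * A).trace) := by
  rw [trace_form, trace_form, map_sum]
  refine Finset.sum_congr rfl fun p _ => ?_
  rw [_root_.map_mul, Complex.conj_conj]
  ring

lemma trace_mul_pauli (A : Matrix (Q n) (Q n) ℂ) (y : F n) :
    (Aᴴ * pauli y).trace = (2 : ℂ) ^ n * (starRingEnd ℂ) (pauliCoeff A y) := by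
  rw [trace_conj_swap, trace_pauli_eq, _root_.map_mul, map_pow]
  have : (starRingEnd ℂ) (2 : ℂ) = 2 := by simp [Complex.ext_iff]
  rw [this]

lemma trace_projGt_mul_pauli (k : ℕ) (A : Matrix (Q n) (Q n) ℂ) {y : F n}
    (hy : y ∈ Finset.univ.filter (fun x : F n => k < wt x)) :
    ((projGt k A)ᴴ * pauli y).trace = (2 : ℂ) ^ n * (starRingEnd ℂ) (pauliCoeff A y) := by
  rw [projGt, Matrix.conjTranspose_sum, Finset.sum_mul, Matrix.trace_sum]
  have hterm : ∀ x : F n, ((pauliCoeff A x • pauli x)ᴴ * pauli y).trace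
      = (starRingEnd ℂ) (pauliCoeff A x) * (if x = y then (2:ℂ)^n else 0) := by
    intro x
    rw [Matrix.conjTranspose_smul, Matrix.smul_mul, Matrix.trace_smul, pauli_orth]
    simp
  simp only [hterm, mul_ite, mul_zero]
  rw [Finset.sum_ite_eq' _ y]
  rw [if_pos hy]
  ring

lemma trace_mul_projGt (B A : Matrix (Q n) (Q n) ℂ) (k : ℕ) :
    (Bᴴ * projGt k A).trace = ∑ y ∈ Finset.univ.filter (fun x : F n => k < wt x),
      pauliCoeff A y * (Bᴴ * pauli y).trace := by
  rw [projGt, Matrix.mul_sum, Matrix.trace_sum]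
  exact Finset.sum_congr rfl fun y _ => by rw [Matrix.mul_smul, Matrix.trace_smul, smul_eq_mul]

lemma trace_orth (k : ℕ) (A : Matrix (Q n) (Q n) ℂ) :
    ((A - projGt k A)ᴴ * projGt k A).trace = 0 := by
  rw [trace_mul_projGt]
  refine Finset.sum_eq_zero fun y hy => ?_
  rw [Matrix.conjTranspose_sub, Matrix.sub_mul, Matrix.trace_sub, trace_mul_pauli,
    trace_projGt_mul_pauli k A hy]
  simp

lemma norm2_projGt_le (k : ℕ) (A : Matrix (Q n) (Q n) ℂ) :
    norm2 (projGt k A) ≤ norm2 A := by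
  set P := projGt k A
  have horth : (inner ℂ (toE (A - P)) (toE P) : ℂ) = 0 := by
    rw [inner_toE, trace_orth]
  have hsum : toE (A - P) + toE P = toE A := by
    rw [← toE_add, sub_add_cancel]
  have hpyth : ‖toE A‖ ^ 2 = ‖toE (A - P)‖ ^ 2 + ‖toE P‖ ^ 2 := by
    rw [← hsum, @norm_add_sq ℂ _ _ _ _ (toE (A - P)) (toE P), horth]
    simp
  have hle : ‖toE P‖ ≤ ‖toE A‖ := by
    nlinarith [norm_nonneg (toE P), norm_nonneg (toE A), sq_nonneg (‖toE (A - P)‖)]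
  rw [norm2_eq, norm2_eq]
  have hpos : (0:ℝ) < Real.sqrt (2 ^ n) := by positivity
  exact (div_le_div_iff_of_pos_right hpos).mpr hle

lemma pauliCoeff_add (A B : Matrix (Q n) (Q n) ℂ) (x : F n) :
    pauliCoeff (A + B) x = pauliCoeff A x + pauliCoeff B x := by
  rw [pauliCoeff, pauliCoeff, pauliCoeff, Matrix.mul_add, Matrix.trace_add]
  ring

lemma pauliCoeff_smul (s : ℂ) (A : Matrix (Q n) (Q n) ℂ) (x : F n) :
    pauliCoeff (s • A) x = s * pauliCoeff A x := by
  rw [pauliCoeff, pauliCoeff, Matrix.mul_smul, Matrix.trace_smul]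
  simp
  ring

lemma projGt_add (k : ℕ) (A B : Matrix (Q n) (Q n) ℂ) :
    projGt k (A + B) = projGt k A + projGt k B := by
  rw [projGt, projGt, projGt, ← Finset.sum_add_distrib]
  refine Finset.sum_congr rfl fun x _ => ?_
  rw [pauliCoeff_add, add_smul]

lemma projGt_smul (k : ℕ) (s : ℂ) (A : Matrix (Q n) (Q n) ℂ) :
    projGt k (s • A) = s • projGt k A := by
  rw [projGt, projGt, Finset.smul_sum]
  refine Finset.sum_congr rfl fun x _ => ?_
  rw [pauliCoeff_smul, smul_smul]

lemma pauli_zero : pauli (0 : F n) = 1 := by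
  ext u v
  simp [pauli, Matrix.one_apply, eq_comm]

lemma wt_zero : wt (0 : F n) = 0 := by simp [wt]

lemma projGt_one (k : ℕ) : projGt k (1 : Matrix (Q n) (Q n) ℂ) = 0 := by
  rw [projGt]
  refine Finset.sum_eq_zero fun x hx => ?_
  have hx0 : x ≠ 0 := by
    intro h
    rw [Finset.mem_filter] at hx
    rw [h, wt_zero] at hx
    exact Nat.not_lt_zero _ hx.2
  have h1 : (pauli x)ᴴ * (1 : Matrix (Q n) (Q n) ℂ) = (pauli x)ᴴ * pauli 0 := by
    rw [pauli_zero]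
  have : pauliCoeff (1 : Matrix (Q n) (Q n) ℂ) x = 0 := by
    rw [pauliCoeff, h1, pauli_orth, if_neg hx0, mul_zero]
  rw [this, zero_smul]

/-! #### Spectral estimate for the Taylor remainder of `exp(-itH)` -/

lemma norm2_unitary_conj (V M : Matrix (Q n) (Q n) ℂ) (hV' : star V * V = 1) :
    norm2 (V * M * star V) = norm2 M := by
  have hcanc : ∀ X : Matrix (Q n) (Q n) ℂ, Vᴴ * (V * X) = X := fun X => by
    rw [← Matrix.mul_assoc, ← Matrix.star_eq_conjTranspose, hV', Matrix.one_mul]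
  have key : (V * M * star V)ᴴ * (V * M * star V) = V * (Mᴴ * M) * star V := by
    rw [Matrix.star_eq_conjTranspose, Matrix.conjTranspose_mul, Matrix.conjTranspose_mul,
      Matrix.conjTranspose_conjTranspose]
    simp only [Matrix.mul_assoc, hcanc]
  have htr : ((V * M * star V)ᴴ * (V * M * star V)).trace = (Mᴴ * M).trace := by
    rw [key, Matrix.trace_mul_comm]
    have : star V * (V * (Mᴴ * M)) = Mᴴ * M := by
      rw [← Matrix.mul_assoc, hV', Matrix.one_mul]
    rw [this]
  rw [norm2, norm2, htr]

lemma norm2_diagonal_le (d : Q n → ℂ) {β : ℝ} (hβ : 0 ≤ β)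
    (h : ∀ i, ‖d i‖ ≤ β) : norm2 (Matrix.diagonal d) ≤ β := by
  have htr : ((Matrix.diagonal d)ᴴ * Matrix.diagonal d).trace
      = ∑ i, ((Complex.normSq (d i) : ℝ) : ℂ) := by
    rw [Matrix.diagonal_conjTranspose, Matrix.diagonal_mul_diagonal, Matrix.trace_diagonal]
    refine Finset.sum_congr rfl fun i _ => ?_
    simp [Complex.normSq_eq_conj_mul_self]
  have hre : (((Matrix.diagonal d)ᴴ * Matrix.diagonal d).trace).re
      = ∑ i, Complex.normSq (d i) := by
    rw [htr, Complex.re_sum]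
    exact Finset.sum_congr rfl fun i _ => Complex.ofReal_re _
  have hsum : (∑ i, Complex.normSq (d i)) ≤ (2:ℝ) ^ n * β ^ 2 := by
    calc (∑ i, Complex.normSq (d i)) ≤ ∑ _i : Q n, β ^ 2 := by
          refine Finset.sum_le_sum fun i _ => ?_
          rw [← Complex.sq_norm]
          exact pow_le_pow_left₀ (norm_nonneg _) (h i) 2
      _ = (2:ℝ) ^ n * β ^ 2 := by
          rw [Finset.sum_const, Finset.card_univ, card_Q, nsmul_eq_mul]
          push_cast
          ring
  rw [norm2, hre]
  calc Real.sqrt ((∑ i, Complex.normSq (d i)) / 2 ^ n) ≤ Real.sqrt (β ^ 2) := by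
        apply Real.sqrt_le_sqrt
        rw [div_le_iff₀ (by positivity)]
        calc (∑ i, Complex.normSq (d i)) ≤ (2:ℝ) ^ n * β ^ 2 := hsum
          _ = β ^ 2 * 2 ^ n := by ring
    _ = β := Real.sqrt_sq hβ

lemma eigen_bound {H : Matrix (Q n) (Q n) ℂ} (hH : H.IsHermitian) (hnorm : ‖H‖ ≤ 1)
    (i : Q n) : |hH.eigenvalues i| ≤ 1 := by
  have hmem := hH.eigenvalues_mem_spectrum_real i
  have h := spectrum.norm_le_norm_of_mem hmem
  rw [Real.norm_eq_abs] at h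
  exact h.trans hnorm

lemma exp_smul_eq {H : Matrix (Q n) (Q n) ℂ} (hH : H.IsHermitian) (t : ℝ) :
    NormedSpace.exp ((-(Complex.I * t)) • H) =
      (hH.eigenvectorUnitary : Matrix (Q n) (Q n) ℂ) *
        Matrix.diagonal (fun i => Complex.exp (-(Complex.I * t) * ((hH.eigenvalues i : ℝ) : ℂ))) *
        star (hH.eigenvectorUnitary : Matrix (Q n) (Q n) ℂ) := by
  set V := (hH.eigenvectorUnitary : Matrix (Q n) (Q n) ℂ) with hVdef
  have hV : V * star V = 1 := Matrix.mem_unitaryGroup_iff.mp hH.eigenvectorUnitary.2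
  have hV' : star V * V = 1 := Matrix.mem_unitaryGroup_iff'.mp hH.eigenvectorUnitary.2
  set Vu : (Matrix (Q n) (Q n) ℂ)ˣ := ⟨V, star V, hV, hV'⟩ with hVu
  set D : Matrix (Q n) (Q n) ℂ :=
    Matrix.diagonal (fun i => (-(Complex.I * t)) * ((hH.eigenvalues i : ℝ) : ℂ)) with hD
  have hd : D = (-(Complex.I * t)) • Matrix.diagonal (RCLike.ofReal ∘ hH.eigenvalues) := by
    rw [hD, ← Matrix.diagonal_smul]
    congr 1
  have hsm : (-(Complex.I * t)) • H = V * D * star V := by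
    conv_lhs => rw [hH.spectral_theorem, Unitary.conjStarAlgAut_apply]
    rw [hd, Matrix.mul_smul, Matrix.smul_mul]
  have h1 : (↑Vu : Matrix (Q n) (Q n) ℂ) = V := rfl
  have h2 : (↑Vu⁻¹ : Matrix (Q n) (Q n) ℂ) = star V := rfl
  have hconj := Matrix.exp_units_conj Vu D
  rw [h1, h2] at hconj
  rw [hsm, hconj, hD, Matrix.exp_diagonal]
  rw [Pi.exp_def]
  congr 1
  funext i
  rw [← Complex.exp_eq_exp_ℂ]

lemma norm2_remainder {H : Matrix (Q n) (Q n) ℂ} (hH : H.IsHermitian) (hnorm : ‖H‖ ≤ 1)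
    (t : ℝ) :
    norm2 (NormedSpace.exp ((-(Complex.I * t)) • H) - (1 - (Complex.I * t) • H)) ≤ t ^ 2 := by
  set V := (hH.eigenvectorUnitary : Matrix (Q n) (Q n) ℂ) with hVdef
  have hV : V * star V = 1 := Matrix.mem_unitaryGroup_iff.mp hH.eigenvectorUnitary.2
  have hV' : star V * V = 1 := Matrix.mem_unitaryGroup_iff'.mp hH.eigenvectorUnitary.2
  set d : Q n → ℂ := fun i => Complex.exp (-(Complex.I * t) * ((hH.eigenvalues i : ℝ) : ℂ))
      - (1 - (Complex.I * t) * ((hH.eigenvalues i : ℝ) : ℂ)) with hd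
  have hone : (1 : Matrix (Q n) (Q n) ℂ) = V * Matrix.diagonal (fun _ => (1:ℂ)) * star V := by
    rw [Matrix.diagonal_one, Matrix.mul_one, hV]
  have hsmul : (Complex.I * t) • H
      = V * Matrix.diagonal (fun i => (Complex.I * t) * ((hH.eigenvalues i : ℝ) : ℂ)) * star V := by
    conv_lhs => rw [hH.spectral_theorem, Unitary.conjStarAlgAut_apply]
    have : Matrix.diagonal (fun i => (Complex.I * t) * ((hH.eigenvalues i : ℝ) : ℂ))
        = (Complex.I * t) • Matrix.diagonal (RCLike.ofReal ∘ hH.eigenvalues) := by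
      rw [← Matrix.diagonal_smul]
      congr 1
    rw [this, Matrix.mul_smul, Matrix.smul_mul]
  have hErep : NormedSpace.exp ((-(Complex.I * t)) • H) - (1 - (Complex.I * t) • H)
      = V * Matrix.diagonal d * star V := by
    rw [exp_smul_eq hH t, hone, hsmul, ← hVdef]
    rw [← Matrix.sub_mul, ← Matrix.mul_sub, ← Matrix.sub_mul, ← Matrix.mul_sub]
    congr 2
    rw [← Matrix.diagonal_sub, ← Matrix.diagonal_sub]
  rw [hErep, norm2_unitary_conj _ _ hV']
  apply norm2_diagonal_le d (sq_nonneg t)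
  intro i
  have hx := exp_taylor2 (-(t * hH.eigenvalues i))
  have hdi : d i = Complex.exp (Complex.I * ((-(t * hH.eigenvalues i) : ℝ) : ℂ)) - 1
      - Complex.I * ((-(t * hH.eigenvalues i) : ℝ) : ℂ) := by
    rw [hd]
    push_cast
    ring_nf
  rw [hdi]
  refine le_trans hx ?_
  have habs := abs_le.mp (eigen_bound hH hnorm i)
  nlinarith [sq_nonneg t, sq_nonneg (hH.eigenvalues i), sq_nonneg (t * hH.eigenvalues i),
    sq_nonneg (t * (1 - hH.eigenvalues i)), sq_nonneg (t * (1 + hH.eigenvalues i))]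

end LocAux

set_option maxHeartbeats 1000000 in
/-- structural dichotomy for locality testing.  With
`α = (ε₂-ε₁)/(3c)`, if `‖H_{>k}‖₂ ≤ ε₁` then `‖U(α)_{>k}‖₂ ≤ (ε₂-ε₁)(2ε₁+ε₂)/(9c)`,
while if `‖H_{>k}‖₂ ≥ ε₂` then `‖U(α)_{>k}‖₂ ≥ (ε₂-ε₁)(ε₁+2ε₂)/(9c)`, where
`U(α) = exp(-iαH)`. -/
theorem locality_testing_dichotomy (n k : ℕ) (ε₁ ε₂ c : ℝ)
    (hε₁ : 0 ≤ ε₁) (hε : ε₁ < ε₂) (hc : 1 < c)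
    (htaylor : ∀ (H' : Matrix (Fin n → ZMod 2) (Fin n → ZMod 2) ℂ),
      H'.IsHermitian → ‖H'‖ ≤ 1 → ∀ t : ℝ, 0 ≤ t → t ≤ 1 / 2 →
        norm2 (NormedSpace.exp ((-(Complex.I * t)) • H') - (1 - (Complex.I * t) • H'))
          ≤ c * t ^ 2)
    (H : Matrix (Fin n → ZMod 2) (Fin n → ZMod 2) ℂ)
    (hH : H.IsHermitian) (hHnorm : ‖H‖ ≤ 1) :
    (norm2 (projGt k H) ≤ ε₁ →
      norm2 (projGt k (NormedSpace.exp ((-(Complex.I * ((ε₂ - ε₁) / (3 * c)))) • H)))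
        ≤ (ε₂ - ε₁) * (2 * ε₁ + ε₂) / (9 * c)) ∧
    (norm2 (projGt k H) ≥ ε₂ →
      norm2 (projGt k (NormedSpace.exp ((-(Complex.I * ((ε₂ - ε₁) / (3 * c)))) • H)))
        ≥ (ε₂ - ε₁) * (ε₁ + 2 * ε₂) / (9 * c)) := by
  clear htaylor
  set α : ℝ := (ε₂ - ε₁) / (3 * c) with hα
  have hc0 : (0:ℝ) < c := lt_trans one_pos hc
  have hsc : ((ε₂ : ℂ) - (ε₁ : ℂ)) / (3 * (c : ℂ)) = ((α : ℝ) : ℂ) := by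
    rw [hα]
    push_cast
    ring
  rw [hsc]
  have hαnn : 0 ≤ α := div_nonneg (by linarith) (by linarith)
  set U := NormedSpace.exp ((-(Complex.I * (α : ℂ))) • H) with hU
  set E := U - (1 - (Complex.I * (α : ℂ)) • H) with hE
  set X := projGt k U with hX
  set Z := projGt k E with hZ
  set Y := (-(Complex.I * (α : ℂ))) • projGt k H with hY
  -- decomposition
  have hdecomp : X = Z + Y := by
    have hUeq : U = E + (1 - (Complex.I * (α : ℂ)) • H) := by
      rw [hE, sub_add_cancel]
    rw [hX, hZ, hY]
    conv_lhs => rw [hUeq]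
    rw [LocAux.projGt_add]
    rw [add_right_inj]
    have h1 : (1 : Matrix (Fin n → ZMod 2) (Fin n → ZMod 2) ℂ) - (Complex.I * (α : ℂ)) • H
        = 1 + (-(Complex.I * (α : ℂ))) • H := by
      rw [neg_smul, ← sub_eq_add_neg]
    rw [h1, LocAux.projGt_add, LocAux.projGt_one, LocAux.projGt_smul, zero_add]
  -- norm estimates
  have hZle : norm2 Z ≤ α ^ 2 := by
    rw [hZ, hE]
    exact le_trans (LocAux.norm2_projGt_le k E) (LocAux.norm2_remainder hH hHnorm α)
  have hZle' : norm2 Z ≤ c * α ^ 2 :=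
    le_trans hZle (by nlinarith [sq_nonneg α])
  have hYnorm : norm2 Y = α * norm2 (projGt k H) := by
    rw [hY, LocAux.norm2_smul]
    congr 1
    rw [norm_neg, norm_mul, Complex.norm_I, one_mul, Complex.norm_real, Real.norm_eq_abs,
      abs_of_nonneg hαnn]
  constructor
  · intro h1
    have htri : norm2 X ≤ norm2 Z + norm2 Y := by
      rw [hdecomp]
      exact LocAux.norm2_add_le _ _
    have hYle : norm2 Y ≤ α * ε₁ := by
      rw [hYnorm]
      exact mul_le_mul_of_nonneg_left h1 hαnn
    have harith : c * α ^ 2 + α * ε₁ = (ε₂ - ε₁) * (2 * ε₁ + ε₂) / (9 * c) := by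
      rw [hα]
      field_simp
      ring
    linarith
  · intro h2
    have hYX : norm2 Y ≤ norm2 X + norm2 Z := by
      have hYeq : Y = X + (-1 : ℂ) • Z := by
        rw [hdecomp, neg_one_smul]
        abel
      calc norm2 Y = norm2 (X + (-1 : ℂ) • Z) := by rw [hYeq]
        _ ≤ norm2 X + norm2 ((-1 : ℂ) • Z) := LocAux.norm2_add_le _ _
        _ = norm2 X + norm2 Z := by rw [LocAux.norm2_smul]; simp
    have hYge : α * ε₂ ≤ norm2 Y := by
      rw [hYnorm]
      exact mul_le_mul_of_nonneg_left h2 hαnn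
    have harith : α * ε₂ - c * α ^ 2 = (ε₂ - ε₁) * (ε₁ + 2 * ε₂) / (9 * c) := by
      rw [hα]
      field_simp
      ring
    have : (ε₂ - ε₁) * (ε₁ + 2 * ε₂) / (9 * c) ≤ norm2 X := by
      rw [← harith]
      linarith
    exact this
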